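/- Let W ∈ ℝ^{n×n} and m > 0 satisfy (I − W) ⪰ mI, let D ∈ ℝ^{n×n} be diagonal with Dᵢᵢ ≥ 0 for all i, set J = (I + D)^{-1}, and let v ∈ ℝⁿ. Then: (i) the matrix (I + D) − Wᵀ is invertible; (ii) the matrix (I − J W)ᵀ is invertible; and (iii) if ũ ∈ ℝⁿ is the unique solution of ((I + D) − Wᵀ) ũ = v — equivalently, the unique zero of the operator sum F̃(ũ) + G̃(ũ) with F̃(ũ) = (I − Wᵀ)ũ and G̃(ũ) = D ũ − v — then the vector u⋆ = v + Wᵀ ũ satisfies (I − J W)ᵀ u⋆ = v, i.e., u⋆ = (I − J W)^{-T} v. -/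

import Mathlib

open Matrix

lemma aux_unit_A (n : ℕ) (W : Matrix (Fin n) (Fin n) ℝ) (m : ℝ) (hm : 0 < m)
    (hmono : ((1/2 : ℝ) • ((1 - W) + (1 - W)ᵀ) -
        m • (1 : Matrix (Fin n) (Fin n) ℝ)).PosSemidef)
    (d : Fin n → ℝ) (hd : ∀ i, 0 ≤ d i) :
    IsUnit ((1 + Matrix.diagonal d) - Wᵀ : Matrix (Fin n) (Fin n) ℝ) := by
  set A : Matrix (Fin n) (Fin n) ℝ := (1 + Matrix.diagonal d) - Wᵀ with hA
  have hm1 : (m • (1 : Matrix (Fin n) (Fin n) ℝ)) = Matrix.diagonal (fun _ => m) := by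
    ext i j; simp [Matrix.one_apply, Matrix.diagonal_apply]
  have hSdef : (1/2:ℝ) • (A + Aᵀ) =
      (((1/2:ℝ) • ((1 - W) + (1 - W)ᵀ) - m • 1) + (m • 1 + Matrix.diagonal d)) := by
    have hAT : Aᵀ = (1 + Matrix.diagonal d) - W := by
      simp [hA, transpose_sub, transpose_add, diagonal_transpose]
    rw [hAT, hA, transpose_sub, transpose_one]
    module
  have hS : ((1/2:ℝ) • (A + Aᵀ)).PosDef := by
    rw [hSdef]
    refine Matrix.PosDef.posSemidef_add hmono ?_
    rw [hm1, diagonal_add]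
    exact Matrix.PosDef.diagonal fun i => by linarith [hd i]
  rw [← Matrix.mulVec_injective_iff_isUnit]
  intro x y hxy
  have hz : A.mulVec (x - y) = 0 := by
    rw [Matrix.mulVec_sub, hxy, sub_self]
  have hsub : x - y = 0 := by
    by_contra h0
    have hpos := hS.dotProduct_mulVec_pos h0
    rw [star_trivial] at hpos
    have hq : (x - y) ⬝ᵥ ((1/2:ℝ) • (A + Aᵀ)).mulVec (x - y)
        = (x - y) ⬝ᵥ A.mulVec (x - y) := by
      rw [smul_mulVec, dotProduct_smul, add_mulVec, dotProduct_add]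
      rw [mulVec_transpose]
      rw [show (x - y) ⬝ᵥ (x - y) ᵥ* A = (x - y) ᵥ* A ⬝ᵥ (x - y) from dotProduct_comm _ _]
      rw [← dotProduct_mulVec]
      ring_nf
    rw [hq, hz, dotProduct_zero] at hpos
    exact lt_irrefl _ hpos
  exact sub_eq_zero.mp hsub

/-- **Theorem 3 (backward pass as an operator splitting problem).**
If `I - W ⪰ mI` with `m > 0`, `D` is diagonal with `Dᵢᵢ ≥ 0`, and
`J = (I + D)⁻¹` (the diagonal matrix with entries `1/(1 + Dᵢᵢ)`), then
(i) `(I + D) - Wᵀ` is invertible; (ii) `(I - JW)ᵀ` is invertible; and (iii) if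
`((I + D) - Wᵀ) ũ = v` then `u⋆ = v + Wᵀ ũ` satisfies `(I - JW)ᵀ u⋆ = v`,
i.e. `u⋆ = (I - JW)⁻ᵀ v`. -/
theorem backward_pass_splitting (n : ℕ)
    (W : Matrix (Fin n) (Fin n) ℝ) (m : ℝ) (hm : 0 < m)
    (hmono : ((1/2 : ℝ) • ((1 - W) + (1 - W)ᵀ) -
        m • (1 : Matrix (Fin n) (Fin n) ℝ)).PosSemidef)
    (d : Fin n → ℝ) (hd : ∀ i, 0 ≤ d i)
    (J : Matrix (Fin n) (Fin n) ℝ) (hJ : J = Matrix.diagonal (fun i => (1 + d i)⁻¹))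
    (v ut : Fin n → ℝ) :
    IsUnit ((1 + Matrix.diagonal d) - Wᵀ : Matrix (Fin n) (Fin n) ℝ) ∧
    IsUnit ((1 - J * W)ᵀ) ∧
    (((1 + Matrix.diagonal d) - Wᵀ).mulVec ut = v →
      ((1 - J * W)ᵀ).mulVec (v + Wᵀ.mulVec ut) = v) := by
  have hAunit := aux_unit_A n W m hm hmono d hd
  set E : Matrix (Fin n) (Fin n) ℝ := 1 + Matrix.diagonal d with hE
  have hEdiag : E = Matrix.diagonal (fun i => 1 + d i) := by
    rw [hE, ← diagonal_one, diagonal_add]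
  have hne : ∀ i, (1 + d i) ≠ 0 := fun i => by linarith [hd i]
  have hJE : J * E = 1 := by
    rw [hJ, hEdiag, diagonal_mul_diagonal]
    convert diagonal_one using 2
    exact funext fun i => inv_mul_cancel₀ (hne i)
  have hEJ : E * J = 1 := by
    rw [hJ, hEdiag, diagonal_mul_diagonal]
    convert diagonal_one using 2
    exact funext fun i => mul_inv_cancel₀ (hne i)
  have hJT : Jᵀ = J := by rw [hJ, diagonal_transpose]
  have hBT : (1 - J * W)ᵀ = 1 - Wᵀ * J := by
    rw [transpose_sub, transpose_one, transpose_mul, hJT]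
  have hfact : (1 - Wᵀ * J) * E = E - Wᵀ := by
    rw [sub_mul, one_mul, mul_assoc, hJE, mul_one]
  have hJunit : IsUnit J := ⟨⟨J, E, hJE, hEJ⟩, rfl⟩
  have hBunit : IsUnit ((1 - J * W)ᵀ) := by
    rw [hBT]
    have : (1 - Wᵀ * J) = (E - Wᵀ) * J := by
      rw [← hfact, mul_assoc, hEJ, mul_one]
    rw [this]
    exact hAunit.mul hJunit
  refine ⟨hAunit, hBunit, fun hsol => ?_⟩
  have hvut : v + Wᵀ.mulVec ut = E.mulVec ut := by
    rw [← hsol, sub_mulVec]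
    abel
  rw [hBT, hvut, mulVec_mulVec, hfact, hsol]
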